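/- Suppose θ²d ≠ 1. Then for every k ≥ 0 the conditional variances of the level sums satisfy Var(S_k | σ_ρ = +1) = 4η(1−η)·d^k·((θ²d)^k − 1)/(θ²d − 1) and Var(S̃_k | σ_ρ = +1) = 4·d^k·δ(1−δ) + 4(1−2δ)²·η(1−η)·d^k·((θ²d)^k − 1)/(θ²d − 1). -/

import Mathlib

open MeasureTheory ProbabilityTheory Filter Topology

namespace BlockModelStmt5

/-- Vertices of the infinite rooted `d`-ary tree: finite strings over `{0, …, d-1}`.
The root is the empty string. -/
abbrev Vertex (d : ℕ) := List (Fin d)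

/-- The spin (label) of the broadcast process at a vertex `v`: the root label times the
product of the edge variables `ε w` over all nonempty prefixes `w` of `v`. -/
noncomputable def spin {Ω : Type} {d : ℕ} (σρ : Ω → ℝ) (ε : Vertex d → Ω → ℝ)
    (v : Vertex d) (ω : Ω) : ℝ :=
  σρ ω * ((v.inits.filter (fun w => w ≠ [])).map (fun w => ε w ω)).prod

/-- The noisy spin at a vertex `v`: the spin times the extra noise variable `ζ v`. -/
noncomputable def nspin {Ω : Type} {d : ℕ} (σρ : Ω → ℝ) (ε ζ : Vertex d → Ω → ℝ)
    (v : Vertex d) (ω : Ω) : ℝ :=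
  spin σρ ε v ω * ζ v ω

/-- The σ-algebra generated by the labels `(f v)` for `v` ranging over level `k`
(strings of length `k`). -/
noncomputable def levelAlg {Ω : Type} [MeasurableSpace Ω] {d : ℕ}
    (f : Vertex d → Ω → ℝ) (k : ℕ) : MeasurableSpace Ω :=
  ⨆ v : {v : Vertex d // v.length = k}, MeasurableSpace.comap (f v.1) inferInstance

/-- The sum of the labels `f v` over all vertices `v` at level `k` (strings of length `k`,
enumerated as functions `Fin k → Fin d` via `List.ofFn`). -/
noncomputable def levelSum {Ω : Type} {d : ℕ} (f : Vertex d → Ω → ℝ) (k : ℕ) (ω : Ω) : ℝ :=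
  ∑ g : Fin k → Fin d, f (List.ofFn g) ω

/-- The hypotheses of the broadcast process with parameter `η` and noise `δ` on the infinite
rooted `d`-ary tree: `σρ` is uniform on `{-1,+1}`, the `ε v` (for nonempty `v`) are `±1`-valued
with `P(ε v = 1) = 1 - η`, the `ζ v` are `±1`-valued with `P(ζ v = 1) = 1 - δ`, and `σρ`
together with all the `ε v` (nonempty `v`) and `ζ v` are jointly independent. -/
structure Setup {Ω : Type} [MeasurableSpace Ω] (μ : Measure Ω) (d : ℕ) (η δ : ℝ)
    (σρ : Ω → ℝ) (ε ζ : Vertex d → Ω → ℝ) : Prop where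
  meas_root : Measurable σρ
  meas_ε : ∀ v, Measurable (ε v)
  meas_ζ : ∀ v, Measurable (ζ v)
  root_pm : ∀ ω, σρ ω = 1 ∨ σρ ω = -1
  root_unif : μ {ω | σρ ω = 1} = 1/2
  ε_pm : ∀ v, v ≠ ([] : Vertex d) → ∀ ω, ε v ω = 1 ∨ ε v ω = -1
  ε_prob : ∀ v, v ≠ ([] : Vertex d) → μ {ω | ε v ω = 1} = ENNReal.ofReal (1 - η)
  ζ_pm : ∀ v ω, ζ v ω = 1 ∨ ζ v ω = -1
  ζ_prob : ∀ v, μ {ω | ζ v ω = 1} = ENNReal.ofReal (1 - δ)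
  indep : iIndepFun
    (fun i : Unit ⊕ {v : Vertex d // v ≠ []} ⊕ Vertex d =>
      Sum.elim (fun _ => σρ) (Sum.elim (fun v => ε v.1) ζ) i) μ


open scoped symmDiff

section AuxProb
variable {Ω : Type} [MeasurableSpace Ω] {μ : Measure Ω}

lemma integrable_of_pm [IsProbabilityMeasure μ] {X : Ω → ℝ} (hX : Measurable X)
    (hpm : ∀ ω, X ω = 1 ∨ X ω = -1) : Integrable X μ := by
  refine (integrable_const (1:ℝ)).mono' hX.aestronglyMeasurable ?_
  filter_upwards with ω
  rcases hpm ω with h | h <;> simp [h]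

lemma integral_pm [IsProbabilityMeasure μ] {X : Ω → ℝ} (hX : Measurable X)
    (hpm : ∀ ω, X ω = 1 ∨ X ω = -1) {p : ℝ} (hp0 : 0 ≤ p)
    (hp : μ {ω | X ω = 1} = ENNReal.ofReal p) :
    ∫ ω, X ω ∂μ = 2*p - 1 := by
  have hs : MeasurableSet {ω | X ω = 1} := hX (measurableSet_singleton 1)
  have hXeq : X = fun ω => 2 * ({ω | X ω = 1}.indicator (fun _ => (1:ℝ)) ω) - 1 := by
    funext ω
    rcases hpm ω with h | h
    · simp [Set.indicator_of_mem, h, Set.mem_setOf_eq]; norm_num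
    · have : ω ∉ {ω | X ω = 1} := by simp [Set.mem_setOf_eq, h]; norm_num
      simp [Set.indicator_of_notMem this, h]
  rw [hXeq]
  have hind : Integrable ({ω | X ω = 1}.indicator (fun _ => (1:ℝ))) μ :=
    (integrable_const (1:ℝ)).indicator hs
  rw [integral_sub ((hind.const_mul 2)) (integrable_const 1)]
  rw [integral_const_mul, integral_indicator_const (1:ℝ) hs]
  simp [measureReal_def, hp, ENNReal.toReal_ofReal hp0]

lemma integral_finset_prod_pm [IsProbabilityMeasure μ] {ι : Type*} {X : ι → Ω → ℝ}
    (hX : ∀ i, Measurable (X i))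
    (hind : iIndepFun X μ) (F : Finset ι) :
    ∫ ω, ∏ i ∈ F, X i ω ∂μ = ∏ i ∈ F, ∫ ω, X i ω ∂μ := by
  classical
  induction F using Finset.cons_induction with
  | empty => simp
  | cons a F ha ih =>
    have hI : IndepFun (∏ j ∈ F, X j) (X a) μ :=
      hind.indepFun_finset_prod_of_notMem hX ha
    have hfn : (∏ j ∈ F, X j) = fun ω => ∏ j ∈ F, X j ω :=
      funext fun ω => Finset.prod_apply ω F X
    have := hI.integral_mul_eq_mul_integral
      (by rw [hfn]; exact (Finset.measurable_prod F (fun i _ => hX i)).aestronglyMeasurable)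
      (hX a).aestronglyMeasurable
    simp only [Finset.prod_cons, ← ih]
    have heq : ∫ ω, X a ω * ∏ i ∈ F, X i ω ∂μ
        = ∫ ω, ((∏ j ∈ F, X j) * X a) ω ∂μ := by
      congr 1; funext ω; simp [Finset.prod_apply, mul_comm]
    rw [heq, this, hfn]
    ring

lemma prod_pm {ι : Type*} {F : Finset ι} {f : ι → ℝ}
    (h : ∀ i ∈ F, f i = 1 ∨ f i = -1) : (∏ i ∈ F, f i) = 1 ∨ (∏ i ∈ F, f i) = -1 := by
  classical
  induction F using Finset.cons_induction with
  | empty => left; simp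
  | cons a F ha ih =>
    rw [Finset.prod_cons]
    rcases h a (Finset.mem_cons_self a F) with h1 | h1 <;>
      rcases ih (fun i hi => h i (Finset.mem_cons_of_mem hi)) with h2 | h2 <;>
        simp [h1, h2]

end AuxProb

section Prefs
variable {d : ℕ}

/-- The finset of nonempty prefixes of a string. -/
def prefs : List (Fin d) → Finset (List (Fin d))
  | [] => ∅
  | a :: l => (insert [] (prefs l)).image (a :: ·)

lemma ne_nil_of_mem_prefs : ∀ {l w : List (Fin d)}, w ∈ prefs l → w ≠ []
  | a :: l, w, hw => by
    simp only [prefs, Finset.mem_image] at hw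
    obtain ⟨w', _, rfl⟩ := hw
    simp
  | [], w, hw => by simp [prefs] at hw

lemma nil_not_mem_prefs (l : List (Fin d)) : [] ∉ prefs l :=
  fun h => ne_nil_of_mem_prefs h rfl

lemma card_prefs : ∀ l : List (Fin d), (prefs l).card = l.length
  | [] => rfl
  | a :: l => by
    rw [prefs, Finset.card_image_of_injective _ (List.cons_injective),
      Finset.card_insert_of_notMem (nil_not_mem_prefs l), card_prefs l]
    simp

lemma prod_map_inits (l : List (Fin d)) (g : List (Fin d) → ℝ) :
    (l.inits.map g).prod = g [] * ∏ w ∈ prefs l, g w := by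
  induction l generalizing g with
  | nil => simp [prefs]
  | cons a l ih =>
    rw [List.inits_cons, List.map_cons, List.map_map, List.prod_cons,
      ih (g ∘ (a :: ·)), prefs, Finset.prod_image (fun x _ y _ h => List.cons_injective h),
      Finset.prod_insert (nil_not_mem_prefs l)]
    simp [Function.comp]

lemma filter_map_prod (L : List (List (Fin d))) (f : List (Fin d) → ℝ) :
    ((L.filter (fun w => w ≠ [])).map f).prod
      = (L.map (fun w => if w = [] then 1 else f w)).prod := by
  induction L with
  | nil => simp
  | cons w L ih =>
    by_cases h : w = []
    · rw [List.filter_cons_of_neg (by simp [h]), List.map_cons, List.prod_cons, if_pos h,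
        one_mul, ih]
    · rw [List.filter_cons_of_pos (by simp [h]), List.map_cons, List.map_cons, List.prod_cons,
        List.prod_cons, if_neg h, ih]

lemma spin_eq_prod {Ω : Type} (σρ : Ω → ℝ) (ε : Vertex d → Ω → ℝ) (l : Vertex d) (ω : Ω) :
    spin σρ ε l ω = σρ ω * ∏ w ∈ prefs l, ε w ω := by
  rw [spin, filter_map_prod, prod_map_inits, if_pos rfl, one_mul]
  exact congrArg (σρ ω * ·) (Finset.prod_congr rfl fun w hw => if_neg (ne_nil_of_mem_prefs hw))

lemma prefs_cons (a : Fin d) (l : List (Fin d)) :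
    prefs (a :: l) = (insert [] (prefs l)).image (a :: ·) := rfl

lemma symmDiff_prefs_cons_same (a : Fin d) (u v : List (Fin d)) :
    prefs (a :: u) ∆ prefs (a :: v) = (prefs u ∆ prefs v).image (a :: ·) := by
  rw [prefs_cons, prefs_cons, ← Finset.image_symmDiff _ _ List.cons_injective]
  congr 1
  ext w
  by_cases hw : w = [] <;>
    simp [Finset.mem_symmDiff, hw, nil_not_mem_prefs]

lemma head_of_mem_prefs_cons {a : Fin d} {u w : List (Fin d)} (hw : w ∈ prefs (a :: u)) :
    ∃ w', w = a :: w' := by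
  rw [prefs_cons, Finset.mem_image] at hw
  obtain ⟨w', _, rfl⟩ := hw
  exact ⟨w', rfl⟩

lemma card_symmDiff_prefs_cons_ne {a b : Fin d} (hab : a ≠ b) (u v : List (Fin d)) :
    (prefs (a :: u) ∆ prefs (b :: v)).card = (u.length + 1) + (v.length + 1) := by
  have hdisj : Disjoint (prefs (a :: u)) (prefs (b :: v)) := by
    rw [Finset.disjoint_left]
    intro w hwa hwb
    obtain ⟨w1, rfl⟩ := head_of_mem_prefs_cons hwa
    obtain ⟨w2, hw2⟩ := head_of_mem_prefs_cons hwb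
    exact hab (by injection hw2)
  rw [hdisj.symmDiff_eq_sup]
  rw [Finset.sup_eq_union, Finset.card_union_of_disjoint hdisj, card_prefs, card_prefs]
  simp

end Prefs

section TTsec
variable {d : ℕ}

noncomputable def TT (d : ℕ) (θ : ℝ) (k : ℕ) : ℝ :=
  ∑ g : Fin k → Fin d, ∑ h : Fin k → Fin d,
    θ ^ ((prefs (List.ofFn g) ∆ prefs (List.ofFn h)).card)

lemma ofFn_cons {k : ℕ} (a : Fin d) (g : Fin k → Fin d) :
    List.ofFn (Fin.cons a g) = a :: List.ofFn g := by
  rw [List.ofFn_succ]; simp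

lemma sum_ite_diag (A B : ℝ) :
    ∑ _a : Fin d, ∑ _b : Fin d, (if _a = _b then A else B)
      = d * A + ((d:ℝ)^2 - d) * B := by
  have h1 : ∀ a : Fin d, ∑ b : Fin d, (if a = b then A else B) = A + ((d:ℝ) - 1) * B := by
    intro a
    have h2 : ∀ b : Fin d, (if a = b then A else B) = B + (if a = b then A - B else 0) := by
      intro b; by_cases h : a = b <;> simp [h]
    simp only [h2, Finset.sum_add_distrib, Finset.sum_const, Finset.card_univ,
      Finset.sum_ite_eq, Finset.mem_univ, if_true]
    simp [Fintype.card_fin]; ring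
  simp only [h1, Finset.sum_const, Finset.card_univ, Fintype.card_fin, nsmul_eq_mul]
  ring

lemma TT_succ (θ : ℝ) (k : ℕ) :
    TT d θ (k+1) = d * TT d θ k + ((d:ℝ)^2 - d) * ((d:ℝ)^k)^2 * θ^(2*(k+1)) := by
  classical
  set e := Fin.consEquiv (fun _ : Fin (k+1) => Fin d) with he
  have h1 : TT d θ (k+1) = ∑ p : Fin d × (Fin k → Fin d), ∑ q : Fin d × (Fin k → Fin d),
      θ ^ ((prefs (p.1 :: List.ofFn p.2) ∆ prefs (q.1 :: List.ofFn q.2)).card) := by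
    rw [TT, ← Equiv.sum_comp e]
    refine Finset.sum_congr rfl fun p _ => ?_
    rw [← Equiv.sum_comp e
      (fun h => θ ^ ((prefs (List.ofFn (e p)) ∆ prefs (List.ofFn h)).card))]
    refine Finset.sum_congr rfl fun q _ => ?_
    have hep : ∀ r : Fin d × (Fin k → Fin d), List.ofFn (e r) = r.1 :: List.ofFn r.2 :=
      fun r => ofFn_cons r.1 r.2
    rw [hep p, hep q]
  have key : ∀ (a b : Fin d) (g h : Fin k → Fin d),
      θ ^ ((prefs (a :: List.ofFn g) ∆ prefs (b :: List.ofFn h)).card)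
      = if a = b then θ ^ ((prefs (List.ofFn g) ∆ prefs (List.ofFn h)).card)
        else θ ^ (2*(k+1)) := by
    intro a b g h
    by_cases hab : a = b
    · subst hab
      rw [if_pos rfl, symmDiff_prefs_cons_same,
        Finset.card_image_of_injective _ List.cons_injective]
    · rw [if_neg hab, card_symmDiff_prefs_cons_ne hab]
      rw [List.length_ofFn, List.length_ofFn]
      ring_nf
  rw [h1]
  rw [Fintype.sum_prod_type]
  calc ∑ a : Fin d, ∑ g : Fin k → Fin d, ∑ q : Fin d × (Fin k → Fin d),
        θ ^ ((prefs (a :: List.ofFn g) ∆ prefs (q.1 :: List.ofFn q.2)).card)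
      = ∑ a : Fin d, ∑ b : Fin d, if a = b then TT d θ k
          else ((d:ℝ)^k) * ((d:ℝ)^k) * θ^(2*(k+1)) := by
        refine Finset.sum_congr rfl fun a _ => ?_
        have hswap : ∀ g : Fin k → Fin d, ∑ q : Fin d × (Fin k → Fin d),
            θ ^ ((prefs (a :: List.ofFn g) ∆ prefs (q.1 :: List.ofFn q.2)).card)
            = ∑ b : Fin d, ∑ h : Fin k → Fin d,
              (if a = b then θ ^ ((prefs (List.ofFn g) ∆ prefs (List.ofFn h)).card)
                else θ ^ (2*(k+1))) := by
          intro g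
          rw [Fintype.sum_prod_type]
          exact Finset.sum_congr rfl fun b _ => Finset.sum_congr rfl fun h _ => key a b g h
        simp only [hswap]
        rw [Finset.sum_comm]
        refine Finset.sum_congr rfl fun b _ => ?_
        by_cases hab : a = b
        · simp only [if_pos hab, TT]
        · simp only [if_neg hab, Finset.sum_const, Finset.card_univ, nsmul_eq_mul]
          simp [Fintype.card_fin]
          ring
    _ = d * TT d θ k + ((d:ℝ)^2 - d) * (((d:ℝ)^k) * ((d:ℝ)^k) * θ^(2*(k+1))) :=
        sum_ite_diag _ _
    _ = d * TT d θ k + ((d:ℝ)^2 - d) * ((d:ℝ)^k)^2 * θ^(2*(k+1)) := by ring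

lemma TT_closed (η : ℝ) (hx : ((1-2*η)^2 * (d:ℝ)) ≠ 1) : ∀ k : ℕ,
    TT d (1-2*η) k = 4*η*(1-η)*(d:ℝ)^k*(((1-2*η)^2*(d:ℝ))^k - 1)/((1-2*η)^2*(d:ℝ)-1)
      + ((d:ℝ)^k*(1-2*η)^k)^2 := by
  have hx' : ((1-2*η)^2 * (d:ℝ) - 1) ≠ 0 := sub_ne_zero.mpr hx
  intro k
  induction k with
  | zero =>
    simp [TT]
  | succ k ih =>
    rw [TT_succ, ih]
    have h1 : ((1-2*η)^2*(d:ℝ))^k = ((1-2*η)^2)^k*(d:ℝ)^k := mul_pow _ _ k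
    have h2 : ((1-2*η)^2*(d:ℝ))^(k+1) = ((1-2*η)^2)^(k+1)*(d:ℝ)^(k+1) := mul_pow _ _ (k+1)
    have h3 : (1-2*η)^(2*(k+1)) = ((1-2*η)^2)^(k+1) := by rw [pow_mul]
    have h4 : ((d:ℝ)^k*(1-2*η)^k)^2 = ((d:ℝ)^k)^2*((1-2*η)^2)^k := by
      rw [mul_pow, pow_right_comm (1-2*η) _ 2]
    have h5 : ((d:ℝ)^(k+1)*(1-2*η)^(k+1))^2 = ((d:ℝ)^(k+1))^2*((1-2*η)^2)^(k+1) := by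
      rw [mul_pow, pow_right_comm (1-2*η) _ 2]
    rw [h1, h2, h3, h4, h5, pow_succ ((1-2*η)^2) k, pow_succ (d:ℝ) k]
    have hx'' : (d:ℝ) * (1 - η * 2) ^ 2 - 1 ≠ 0 := fun h => hx' (by linear_combination h)
    field_simp
    ring

lemma diag_sum (k : ℕ) (c : ℝ) (f : (Fin k → Fin d) → (Fin k → Fin d) → ℝ)
    (hdiag : ∀ g, f g g = 1) :
    ∑ g : Fin k → Fin d, ∑ h : Fin k → Fin d, (if g = h then (1:ℝ) else c * f g h)
      = (d:ℝ)^k * (1 - c) + c * ∑ g : Fin k → Fin d, ∑ h : Fin k → Fin d, f g h := by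
  classical
  have h1 : ∀ g : Fin k → Fin d, ∑ h : Fin k → Fin d, (if g = h then (1:ℝ) else c * f g h)
      = c * (∑ h : Fin k → Fin d, f g h) + (1 - c) := by
    intro g
    have h2 : ∀ h : Fin k → Fin d, (if g = h then (1:ℝ) else c * f g h)
        = c * f g h + (if g = h then 1 - c * f g h else 0) := by
      intro h; by_cases hgh : g = h <;> simp [hgh]
    simp only [h2, Finset.sum_add_distrib, Finset.sum_ite_eq, Finset.mem_univ, if_true,
      ← Finset.mul_sum, hdiag g]
    ring
  simp only [h1, Finset.sum_add_distrib, Finset.sum_const, Finset.card_univ,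
    Fintype.card_fun, Fintype.card_fin, ← Finset.mul_sum, nsmul_eq_mul]
  push_cast
  ring

end TTsec

section Main
variable {Ω : Type} [MeasurableSpace Ω] {μ : Measure Ω} {d : ℕ} {η δ : ℝ}
  {σρ : Ω → ℝ} {ε ζ : Vertex d → Ω → ℝ}

/-- The full index type of the independent family. -/
abbrev Idx (d : ℕ) := Unit ⊕ {v : Vertex d // v ≠ []} ⊕ Vertex d

/-- The independent family of random variables. -/
noncomputable def XF (σρ : Ω → ℝ) (ε ζ : Vertex d → Ω → ℝ) : Idx d → Ω → ℝ :=
  Sum.elim (fun _ => σρ) (Sum.elim (fun v => ε v.1) ζ)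

namespace Setup

variable (S : Setup μ d η δ σρ ε ζ)
include S

lemma measXF : ∀ i, Measurable (XF σρ ε ζ i) := by
  rintro (_ | v | v)
  · exact S.meas_root
  · exact S.meas_ε v.1
  · exact S.meas_ζ v

lemma pmXF : ∀ i ω, XF σρ ε ζ i ω = 1 ∨ XF σρ ε ζ i ω = -1 := by
  rintro (_ | v | v) ω
  · exact S.root_pm ω
  · exact S.ε_pm v.1 v.2 ω
  · exact S.ζ_pm v ω

lemma indepXF : iIndepFun (XF σρ ε ζ) μ := S.indep

lemma int_root [IsProbabilityMeasure μ] : ∫ ω, σρ ω ∂μ = 0 := by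
  have h : μ {ω | σρ ω = 1} = ENNReal.ofReal (1/2 : ℝ) := by
    rw [S.root_unif]
    rw [ENNReal.ofReal_div_of_pos (by norm_num)]
    norm_num
  have := integral_pm S.meas_root S.root_pm (by norm_num : (0:ℝ) ≤ 1/2) h
  rw [this]; norm_num

lemma int_eps [IsProbabilityMeasure μ] (hη : η ∈ Set.Ioo (0:ℝ) (1/2))
    (v : Vertex d) (hv : v ≠ []) : ∫ ω, ε v ω ∂μ = 1 - 2*η := by
  have := integral_pm (S.meas_ε v) (S.ε_pm v hv)
    (by linarith [hη.2] : (0:ℝ) ≤ 1 - η) (S.ε_prob v hv)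
  rw [this]; ring

lemma int_zeta [IsProbabilityMeasure μ] (hδ : δ ∈ Set.Ico (0:ℝ) (1/2))
    (v : Vertex d) : ∫ ω, ζ v ω ∂μ = 1 - 2*δ := by
  have := integral_pm (S.meas_ζ v) (S.ζ_pm v)
    (by linarith [hδ.2] : (0:ℝ) ≤ 1 - δ) (S.ζ_prob v)
  rw [this]; ring

lemma measurableSet_A : MeasurableSet {ω | σρ ω = 1} :=
  S.meas_root (measurableSet_singleton 1)

lemma measure_A : μ {ω | σρ ω = 1} = 1/2 := S.root_unif

lemma isProb_cond [IsProbabilityMeasure μ] :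
    IsProbabilityMeasure (μ[|{ω | σρ ω = 1}]) := by
  refine cond_isProbabilityMeasure ?_
  rw [S.measure_A]
  norm_num

lemma ae_mem_A : ∀ᵐ ω ∂(μ[|{ω | σρ ω = 1}]), σρ ω = 1 := by
  rw [ProbabilityTheory.cond]
  exact Measure.ae_smul_measure (ae_restrict_mem S.measurableSet_A) _

/-- Integrals against the conditional measure of functions "orthogonal" to the root. -/
lemma integral_cond_eq [IsProbabilityMeasure μ] (f : Ω → ℝ) (hfi : Integrable f μ)
    (hzero : ∫ ω, σρ ω * f ω ∂μ = 0) :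
    ∫ ω, f ω ∂(μ[|{ω | σρ ω = 1}]) = ∫ ω, f ω ∂μ := by
  have hA : MeasurableSet {ω | σρ ω = 1} := S.measurableSet_A
  rw [ProbabilityTheory.cond, integral_smul_measure, S.measure_A,
    ← integral_indicator hA]
  have hind : {ω | σρ ω = 1}.indicator f = fun ω => (σρ ω * f ω + f ω)/2 := by
    funext ω
    by_cases hω : ω ∈ {ω | σρ ω = 1}
    · rw [Set.indicator_of_mem hω]
      have h1 : σρ ω = 1 := hω
      rw [h1]; ring
    · rw [Set.indicator_of_notMem hω]
      have h1 : σρ ω = -1 := (S.root_pm ω).resolve_left hω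
      rw [h1]; ring
  have hσf : Integrable (fun ω => σρ ω * f ω) μ :=
    hfi.bdd_mul (c := 1) S.meas_root.aestronglyMeasurable
      (Filter.Eventually.of_forall fun ω => by rcases S.root_pm ω with h | h <;> simp [h])
  rw [hind]
  have : ∫ ω, (σρ ω * f ω + f ω)/2 ∂μ = (∫ ω, σρ ω * f ω ∂μ + ∫ ω, f ω ∂μ)/2 := by
    rw [integral_div, integral_add hσf hfi]
  rw [this, hzero]
  have h2 : ((1/2 : ENNReal))⁻¹.toReal = 2 := by
    simp
  rw [h2, smul_eq_mul]
  ring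

/-- The key computation: conditional expectation of a product of `ε`s and `ζ`s. -/
lemma integral_cond_prod [IsProbabilityMeasure μ] (hη : η ∈ Set.Ioo (0:ℝ) (1/2))
    (hδ : δ ∈ Set.Ico (0:ℝ) (1/2)) (s t : Finset (Vertex d))
    (hsne : ∀ w ∈ s, w ≠ ([] : Vertex d)) :
    ∫ ω, (∏ w ∈ s, ε w ω) * (∏ w ∈ t, ζ w ω) ∂(μ[|{ω | σρ ω = 1}])
      = (1-2*η)^s.card * (1-2*δ)^t.card := by
  classical
  set F : Finset (Idx d) :=
    (s.attach.image fun w => (Sum.inr (Sum.inl ⟨w.1, hsne w.1 w.2⟩) : Idx d))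
      ∪ (t.image fun w => (Sum.inr (Sum.inr w) : Idx d)) with hF
  have hinj1 : ∀ x ∈ s.attach, ∀ y ∈ s.attach,
      (Sum.inr (Sum.inl ⟨x.1, hsne x.1 x.2⟩) : Idx d)
        = Sum.inr (Sum.inl ⟨y.1, hsne y.1 y.2⟩) → x = y := by
    intro x _ y _ h
    simp only [Sum.inr.injEq, Sum.inl.injEq, Subtype.mk.injEq] at h
    exact Subtype.ext h
  have hinj2 : ∀ x ∈ t, ∀ y ∈ t,
      (Sum.inr (Sum.inr x) : Idx d) = Sum.inr (Sum.inr y) → x = y := by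
    intro x _ y _ h
    simpa using h
  have hdisj : Disjoint (s.attach.image fun w =>
      (Sum.inr (Sum.inl ⟨w.1, hsne w.1 w.2⟩) : Idx d))
      (t.image fun w => (Sum.inr (Sum.inr w) : Idx d)) := by
    rw [Finset.disjoint_left]
    intro i hi1 hi2
    simp only [Finset.mem_image] at hi1 hi2
    obtain ⟨x, _, rfl⟩ := hi1
    obtain ⟨y, _, h⟩ := hi2
    simp at h
  have hprodF : ∀ ω, ∏ i ∈ F, XF σρ ε ζ i ω = (∏ w ∈ s, ε w ω) * (∏ w ∈ t, ζ w ω) := by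
    intro ω
    rw [hF, Finset.prod_union hdisj, Finset.prod_image hinj1, Finset.prod_image hinj2]
    congr 1
    · rw [← Finset.prod_attach s (fun w => ε w ω)]
      rfl
  have hnotmem : (Sum.inl () : Idx d) ∉ F := by
    rw [hF]
    intro h
    rcases Finset.mem_union.mp h with h1 | h1
    · obtain ⟨x, _, hx⟩ := Finset.mem_image.mp h1
      exact absurd hx (by simp)
    · obtain ⟨x, _, hx⟩ := Finset.mem_image.mp h1
      exact absurd hx (by simp)
  have hzero : ∫ ω, σρ ω * ∏ i ∈ F, XF σρ ε ζ i ω ∂μ = 0 := by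
    have heq : (fun ω => σρ ω * ∏ i ∈ F, XF σρ ε ζ i ω)
        = fun ω => ∏ i ∈ Finset.cons (Sum.inl ()) F hnotmem, XF σρ ε ζ i ω := by
      funext ω
      rw [Finset.prod_cons]
      rfl
    rw [heq, integral_finset_prod_pm S.measXF S.indepXF, Finset.prod_cons]
    have h0 : ∫ ω, XF σρ ε ζ (Sum.inl ()) ω ∂μ = 0 := S.int_root
    rw [h0, zero_mul]
  have hintF : Integrable (fun ω => ∏ i ∈ F, XF σρ ε ζ i ω) μ :=
    integrable_of_pm (Finset.measurable_prod F (fun i _ => S.measXF i))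
      (fun ω => prod_pm (fun i _ => S.pmXF i ω))
  have hcond := S.integral_cond_eq (fun ω => ∏ i ∈ F, XF σρ ε ζ i ω) hintF hzero
  have hμint : ∫ ω, ∏ i ∈ F, XF σρ ε ζ i ω ∂μ
      = (1-2*η)^s.card * (1-2*δ)^t.card := by
    rw [integral_finset_prod_pm S.measXF S.indepXF, hF,
      Finset.prod_union hdisj, Finset.prod_image hinj1, Finset.prod_image hinj2]
    have h1 : ∀ w ∈ s.attach, ∫ ω, XF σρ ε ζ (Sum.inr (Sum.inl ⟨w.1, hsne w.1 w.2⟩)) ω ∂μ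
        = 1 - 2*η := fun w _ => S.int_eps hη w.1 (hsne w.1 w.2)
    have h2 : ∀ w ∈ t, ∫ ω, XF σρ ε ζ (Sum.inr (Sum.inr w)) ω ∂μ = 1 - 2*δ :=
      fun w _ => S.int_zeta hδ w
    rw [Finset.prod_congr rfl h1, Finset.prod_congr rfl h2,
      Finset.prod_const, Finset.prod_const, Finset.card_attach]
  calc ∫ ω, (∏ w ∈ s, ε w ω) * (∏ w ∈ t, ζ w ω) ∂(μ[|{ω | σρ ω = 1}])
      = ∫ ω, ∏ i ∈ F, XF σρ ε ζ i ω ∂(μ[|{ω | σρ ω = 1}]) := by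
        refine integral_congr_ae (Filter.EventuallyEq.of_eq ?_)
        funext ω; rw [hprodF]
    _ = (1-2*η)^s.card * (1-2*δ)^t.card := by rw [hcond, hμint]

lemma spin_pm (u : Vertex d) (ω : Ω) : spin σρ ε u ω = 1 ∨ spin σρ ε u ω = -1 := by
  rw [spin_eq_prod]
  have h1 : (∏ w ∈ prefs u, ε w ω) = 1 ∨ (∏ w ∈ prefs u, ε w ω) = -1 :=
    prod_pm (fun w hw => S.ε_pm w (ne_nil_of_mem_prefs hw) ω)
  rcases S.root_pm ω with h | h <;> rcases h1 with h2 | h2 <;> simp [h, h2]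

lemma nspin_pm (u : Vertex d) (ω : Ω) : nspin σρ ε ζ u ω = 1 ∨ nspin σρ ε ζ u ω = -1 := by
  rw [nspin]
  rcases S.spin_pm u ω with h | h <;> rcases S.ζ_pm u ω with h2 | h2 <;> simp [h, h2]

lemma spin_meas (u : Vertex d) : Measurable (spin σρ ε u) := by
  have : spin σρ ε u = fun ω => σρ ω * ∏ w ∈ prefs u, ε w ω :=
    funext fun ω => spin_eq_prod σρ ε u ω
  rw [this]
  exact S.meas_root.mul (Finset.measurable_prod _ fun w _ => S.meas_ε w)

lemma nspin_meas (u : Vertex d) : Measurable (nspin σρ ε ζ u) :=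
  (S.spin_meas u).mul (S.meas_ζ u)

lemma spin_mul_spin (u v : Vertex d) (ω : Ω) :
    spin σρ ε u ω * spin σρ ε v ω = ∏ w ∈ prefs u ∆ prefs v, ε w ω := by
  rw [spin_eq_prod, spin_eq_prod]
  have hroot : σρ ω * σρ ω = 1 := by rcases S.root_pm ω with h | h <;> simp [h]
  have h1 : (∏ w ∈ prefs u, ε w ω) * (∏ w ∈ prefs v, ε w ω)
      = (∏ w ∈ prefs u ∆ prefs v, ε w ω) * (∏ w ∈ prefs u ∩ prefs v, ε w ω * ε w ω) := by
    rw [← Finset.prod_inter_mul_prod_diff (prefs u) (prefs v) (fun w => ε w ω),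
      ← Finset.prod_inter_mul_prod_diff (prefs v) (prefs u) (fun w => ε w ω)]
    have hsd : prefs u ∆ prefs v = (prefs u \ prefs v) ∪ (prefs v \ prefs u) := rfl
    rw [hsd, Finset.prod_union (disjoint_sdiff_sdiff), Finset.prod_mul_distrib,
      Finset.inter_comm (prefs v) (prefs u)]
    ring
  have h2 : ∏ w ∈ prefs u ∩ prefs v, ε w ω * ε w ω = 1 := by
    refine Finset.prod_eq_one fun w hw => ?_
    rcases S.ε_pm w (ne_nil_of_mem_prefs (Finset.mem_of_mem_inter_left hw)) ω with h | h <;>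
      simp [h]
  calc σρ ω * (∏ w ∈ prefs u, ε w ω) * (σρ ω * ∏ w ∈ prefs v, ε w ω)
      = (σρ ω * σρ ω) * ((∏ w ∈ prefs u, ε w ω) * (∏ w ∈ prefs v, ε w ω)) := by ring
    _ = ∏ w ∈ prefs u ∆ prefs v, ε w ω := by rw [hroot, h1, h2, one_mul, mul_one]

end Setup
end Main

section Moments
variable {Ω : Type} [MeasurableSpace Ω] {μ : Measure Ω} {d : ℕ} {η δ : ℝ}
  {σρ : Ω → ℝ} {ε ζ : Vertex d → Ω → ℝ}

namespace Setup

variable (S : Setup μ d η δ σρ ε ζ)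
include S

lemma mem_symmDiff_prefs_ne_nil {u v w : Vertex d} (hw : w ∈ prefs u ∆ prefs v) : w ≠ [] := by
  rw [Finset.mem_symmDiff] at hw
  rcases hw with ⟨h, _⟩ | ⟨h, _⟩ <;> exact ne_nil_of_mem_prefs h

omit S in
lemma prefs_ne_nil' {u : Vertex d} : ∀ w ∈ prefs u, w ≠ ([] : Vertex d) :=
  fun _ hw => ne_nil_of_mem_prefs hw

variable [IsProbabilityMeasure μ]

lemma int_cond_spin (hη : η ∈ Set.Ioo (0:ℝ) (1/2)) (hδ : δ ∈ Set.Ico (0:ℝ) (1/2))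
    (u : Vertex d) :
    ∫ ω, spin σρ ε u ω ∂(μ[|{ω | σρ ω = 1}]) = (1-2*η)^u.length := by
  have h1 : ∫ ω, spin σρ ε u ω ∂(μ[|{ω | σρ ω = 1}])
      = ∫ ω, (∏ w ∈ prefs u, ε w ω) * (∏ w ∈ (∅ : Finset (Vertex d)), ζ w ω)
          ∂(μ[|{ω | σρ ω = 1}]) := by
    refine integral_congr_ae ?_
    filter_upwards [S.ae_mem_A] with ω hω
    rw [spin_eq_prod, hω, one_mul, Finset.prod_empty, mul_one]
  rw [h1, S.integral_cond_prod hη hδ _ _ (fun _ hw => ne_nil_of_mem_prefs hw)]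
  rw [card_prefs]
  simp

lemma int_cond_spin_mul (hη : η ∈ Set.Ioo (0:ℝ) (1/2)) (hδ : δ ∈ Set.Ico (0:ℝ) (1/2))
    (u v : Vertex d) :
    ∫ ω, spin σρ ε u ω * spin σρ ε v ω ∂(μ[|{ω | σρ ω = 1}])
      = (1-2*η)^((prefs u ∆ prefs v).card) := by
  have h1 : (fun ω => spin σρ ε u ω * spin σρ ε v ω)
      = fun ω => (∏ w ∈ prefs u ∆ prefs v, ε w ω)
          * (∏ w ∈ (∅ : Finset (Vertex d)), ζ w ω) := by
    funext ω
    rw [S.spin_mul_spin, Finset.prod_empty, mul_one]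
  rw [h1, S.integral_cond_prod hη hδ _ _ (fun _ hw => S.mem_symmDiff_prefs_ne_nil hw)]
  simp

lemma int_cond_nspin (hη : η ∈ Set.Ioo (0:ℝ) (1/2)) (hδ : δ ∈ Set.Ico (0:ℝ) (1/2))
    (u : Vertex d) :
    ∫ ω, nspin σρ ε ζ u ω ∂(μ[|{ω | σρ ω = 1}]) = (1-2*η)^u.length * (1-2*δ) := by
  have h1 : ∫ ω, nspin σρ ε ζ u ω ∂(μ[|{ω | σρ ω = 1}])
      = ∫ ω, (∏ w ∈ prefs u, ε w ω) * (∏ w ∈ ({u} : Finset (Vertex d)), ζ w ω)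
          ∂(μ[|{ω | σρ ω = 1}]) := by
    refine integral_congr_ae ?_
    filter_upwards [S.ae_mem_A] with ω hω
    rw [nspin, spin_eq_prod, hω, one_mul, Finset.prod_singleton]
  rw [h1, S.integral_cond_prod hη hδ _ _ (fun _ hw => ne_nil_of_mem_prefs hw)]
  rw [card_prefs]
  simp

lemma int_cond_nspin_mul (hη : η ∈ Set.Ioo (0:ℝ) (1/2)) (hδ : δ ∈ Set.Ico (0:ℝ) (1/2))
    {u v : Vertex d} (huv : u ≠ v) :
    ∫ ω, nspin σρ ε ζ u ω * nspin σρ ε ζ v ω ∂(μ[|{ω | σρ ω = 1}])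
      = (1-2*δ)^2 * (1-2*η)^((prefs u ∆ prefs v).card) := by
  have h1 : (fun ω => nspin σρ ε ζ u ω * nspin σρ ε ζ v ω)
      = fun ω => (∏ w ∈ prefs u ∆ prefs v, ε w ω)
          * (∏ w ∈ ({u, v} : Finset (Vertex d)), ζ w ω) := by
    funext ω
    rw [Finset.prod_pair huv]
    have : nspin σρ ε ζ u ω * nspin σρ ε ζ v ω
        = (spin σρ ε u ω * spin σρ ε v ω) * (ζ u ω * ζ v ω) := by
      rw [nspin, nspin]; ring
    rw [this, S.spin_mul_spin]
  rw [h1, S.integral_cond_prod hη hδ _ _ (fun _ hw => S.mem_symmDiff_prefs_ne_nil hw),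
    Finset.card_pair huv]
  ring

lemma int_cond_nspin_sq (u : Vertex d) :
    ∫ ω, nspin σρ ε ζ u ω * nspin σρ ε ζ u ω ∂(μ[|{ω | σρ ω = 1}]) = 1 := by
  haveI := S.isProb_cond
  have h1 : (fun ω => nspin σρ ε ζ u ω * nspin σρ ε ζ u ω) = fun _ => (1:ℝ) := by
    funext ω
    rcases S.nspin_pm u ω with h | h <;> simp [h]
  rw [h1]
  simp

end Setup
end Moments

/-- if `θ²d ≠ 1` then for every `k ≥ 0`,
`Var(S_k | σρ = +1) = 4η(1-η)·d^k·((θ²d)^k - 1)/(θ²d - 1)` and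
`Var(S̃_k | σρ = +1) = 4·d^k·δ(1-δ) + 4(1-2δ)²·η(1-η)·d^k·((θ²d)^k - 1)/(θ²d - 1)`,
where `θ = 1 - 2η`. -/
theorem levelSum_variance :
    ∀ (d : ℕ), 2 ≤ d → ∀ η δ : ℝ, η ∈ Set.Ioo (0:ℝ) (1/2) → δ ∈ Set.Ico (0:ℝ) (1/2) →
    (1 - 2*η)^2 * d ≠ 1 →
    ∀ (Ω : Type) (_ : MeasurableSpace Ω) (μ : Measure Ω), IsProbabilityMeasure μ →
    ∀ (σρ : Ω → ℝ) (ε ζ : Vertex d → Ω → ℝ), Setup μ d η δ σρ ε ζ →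
    ∀ k : ℕ,
      (variance (levelSum (spin σρ ε) k) (μ[|{ω | σρ ω = 1}])
        = 4*η*(1-η) * (d:ℝ)^k * (((1 - 2*η)^2 * d)^k - 1) / ((1 - 2*η)^2 * d - 1)) ∧
      (variance (levelSum (nspin σρ ε ζ) k) (μ[|{ω | σρ ω = 1}])
        = 4 * (d:ℝ)^k * δ * (1-δ)
          + 4*(1 - 2*δ)^2 * η*(1-η) * (d:ℝ)^k
            * (((1 - 2*η)^2 * d)^k - 1) / ((1 - 2*η)^2 * d - 1)) := by
  intro d hd η δ hη hδ hx Ω mΩ μ hμP σρ ε ζ S k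
  haveI : IsProbabilityMeasure μ := hμP
  haveI hP : IsProbabilityMeasure (μ[|{ω | σρ ω = 1}]) := S.isProb_cond
  have hcardfun : ((Finset.univ : Finset (Fin k → Fin d)).card : ℝ) = (d:ℝ)^k := by
    rw [Finset.card_univ, Fintype.card_fun]
    push_cast [Fintype.card_fin]
    ring
  -- spin moments
  have hmS : Measurable (levelSum (spin σρ ε) k) := by
    unfold levelSum
    exact Finset.measurable_sum _ (fun g _ => S.spin_meas _)
  have boundS : ∀ ω, ‖levelSum (spin σρ ε) k ω‖ ≤ (d:ℝ)^k := by
    intro ω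
    calc ‖levelSum (spin σρ ε) k ω‖
        ≤ ∑ g : Fin k → Fin d, ‖spin σρ ε (List.ofFn g) ω‖ := norm_sum_le _ _
      _ ≤ ∑ _g : Fin k → Fin d, 1 := by
          refine Finset.sum_le_sum fun g _ => ?_
          rcases S.spin_pm (List.ofFn g) ω with h | h <;> simp [h]
      _ = (d:ℝ)^k := by rw [Finset.sum_const, nsmul_eq_mul, mul_one, hcardfun]
  have hmemS : MemLp (levelSum (spin σρ ε) k) 2 (μ[|{ω | σρ ω = 1}]) :=
    MemLp.of_bound hmS.aestronglyMeasurable _ (Filter.Eventually.of_forall boundS)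
  have m1 : ∫ ω, levelSum (spin σρ ε) k ω ∂(μ[|{ω | σρ ω = 1}])
      = (d:ℝ)^k * (1-2*η)^k := by
    unfold levelSum
    rw [integral_finset_sum _ (fun g _ => integrable_of_pm (S.spin_meas _) (S.spin_pm _))]
    have h1 : ∀ g : Fin k → Fin d, g ∈ Finset.univ →
        ∫ ω, spin σρ ε (List.ofFn g) ω ∂(μ[|{ω | σρ ω = 1}]) = (1-2*η)^k := by
      intro g _
      rw [S.int_cond_spin hη hδ, List.length_ofFn]
    rw [Finset.sum_congr rfl h1, Finset.sum_const, nsmul_eq_mul, hcardfun]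
  have m2 : ∫ ω, (levelSum (spin σρ ε) k ω)^2 ∂(μ[|{ω | σρ ω = 1}])
      = TT d (1-2*η) k := by
    have hsq : (fun ω => (levelSum (spin σρ ε) k ω)^2)
        = fun ω => ∑ g : Fin k → Fin d, ∑ h : Fin k → Fin d,
            spin σρ ε (List.ofFn g) ω * spin σρ ε (List.ofFn h) ω := by
      funext ω
      rw [levelSum, sq, Finset.sum_mul_sum]
    have hint : ∀ (g h : Fin k → Fin d), Integrable
        (fun ω => spin σρ ε (List.ofFn g) ω * spin σρ ε (List.ofFn h) ω)
        (μ[|{ω | σρ ω = 1}]) := by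
      intro g h
      refine integrable_of_pm ((S.spin_meas _).mul (S.spin_meas _)) fun ω => ?_
      rcases S.spin_pm (List.ofFn g) ω with h1 | h1 <;>
        rcases S.spin_pm (List.ofFn h) ω with h2 | h2 <;> simp [h1, h2]
    rw [hsq, integral_finset_sum _ (fun g _ => integrable_finset_sum _ (fun h _ => hint g h)),
      TT]
    refine Finset.sum_congr rfl fun g _ => ?_
    rw [integral_finset_sum _ (fun h _ => hint g h)]
    exact Finset.sum_congr rfl fun h _ => S.int_cond_spin_mul hη hδ _ _
  constructor
  · rw [variance_eq_sub hmemS]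
    have hμX2 : (μ[|{ω | σρ ω = 1}])[(levelSum (spin σρ ε) k)^2]
        = ∫ ω, (levelSum (spin σρ ε) k ω)^2 ∂(μ[|{ω | σρ ω = 1}]) := by
      congr 1
    rw [hμX2, m2, m1, TT_closed η hx k]
    ring
  · -- noisy part
    have hmT : Measurable (levelSum (nspin σρ ε ζ) k) := by
      unfold levelSum
      exact Finset.measurable_sum _ (fun g _ => S.nspin_meas _)
    have boundT : ∀ ω, ‖levelSum (nspin σρ ε ζ) k ω‖ ≤ (d:ℝ)^k := by
      intro ω
      calc ‖levelSum (nspin σρ ε ζ) k ω‖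
          ≤ ∑ g : Fin k → Fin d, ‖nspin σρ ε ζ (List.ofFn g) ω‖ := norm_sum_le _ _
        _ ≤ ∑ _g : Fin k → Fin d, 1 := by
            refine Finset.sum_le_sum fun g _ => ?_
            rcases S.nspin_pm (List.ofFn g) ω with h | h <;> simp [h]
        _ = (d:ℝ)^k := by rw [Finset.sum_const, nsmul_eq_mul, mul_one, hcardfun]
    have hmemT : MemLp (levelSum (nspin σρ ε ζ) k) 2 (μ[|{ω | σρ ω = 1}]) :=
      MemLp.of_bound hmT.aestronglyMeasurable _ (Filter.Eventually.of_forall boundT)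
    have m1t : ∫ ω, levelSum (nspin σρ ε ζ) k ω ∂(μ[|{ω | σρ ω = 1}])
        = (d:ℝ)^k * ((1-2*η)^k * (1-2*δ)) := by
      unfold levelSum
      rw [integral_finset_sum _ (fun g _ => integrable_of_pm (S.nspin_meas _) (S.nspin_pm _))]
      have h1 : ∀ g : Fin k → Fin d, g ∈ Finset.univ →
          ∫ ω, nspin σρ ε ζ (List.ofFn g) ω ∂(μ[|{ω | σρ ω = 1}])
            = (1-2*η)^k * (1-2*δ) := by
        intro g _
        rw [S.int_cond_nspin hη hδ, List.length_ofFn]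
      rw [Finset.sum_congr rfl h1, Finset.sum_const, nsmul_eq_mul, hcardfun]
    have m2t : ∫ ω, (levelSum (nspin σρ ε ζ) k ω)^2 ∂(μ[|{ω | σρ ω = 1}])
        = (d:ℝ)^k * (1 - (1-2*δ)^2) + (1-2*δ)^2 * TT d (1-2*η) k := by
      have hsq : (fun ω => (levelSum (nspin σρ ε ζ) k ω)^2)
          = fun ω => ∑ g : Fin k → Fin d, ∑ h : Fin k → Fin d,
              nspin σρ ε ζ (List.ofFn g) ω * nspin σρ ε ζ (List.ofFn h) ω := by
        funext ω
        rw [levelSum, sq, Finset.sum_mul_sum]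
      have hint : ∀ (g h : Fin k → Fin d), Integrable
          (fun ω => nspin σρ ε ζ (List.ofFn g) ω * nspin σρ ε ζ (List.ofFn h) ω)
          (μ[|{ω | σρ ω = 1}]) := by
        intro g h
        refine integrable_of_pm ((S.nspin_meas _).mul (S.nspin_meas _)) fun ω => ?_
        rcases S.nspin_pm (List.ofFn g) ω with h1 | h1 <;>
          rcases S.nspin_pm (List.ofFn h) ω with h2 | h2 <;> simp [h1, h2]
      rw [hsq, integral_finset_sum _ (fun g _ => integrable_finset_sum _ (fun h _ => hint g h))]
      have hswap : ∀ g : Fin k → Fin d, g ∈ Finset.univ →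
          (∫ ω, ∑ h : Fin k → Fin d, nspin σρ ε ζ (List.ofFn g) ω
              * nspin σρ ε ζ (List.ofFn h) ω ∂(μ[|{ω | σρ ω = 1}]))
            = ∑ h : Fin k → Fin d, ∫ ω, nspin σρ ε ζ (List.ofFn g) ω
              * nspin σρ ε ζ (List.ofFn h) ω ∂(μ[|{ω | σρ ω = 1}]) :=
        fun g _ => integral_finset_sum _ (fun h _ => hint g h)
      rw [Finset.sum_congr rfl hswap]
      have hterm : ∀ g h : Fin k → Fin d,
          ∫ ω, nspin σρ ε ζ (List.ofFn g) ω * nspin σρ ε ζ (List.ofFn h) ω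
            ∂(μ[|{ω | σρ ω = 1}])
          = if g = h then (1:ℝ)
            else (1-2*δ)^2 * (1-2*η)^((prefs (List.ofFn g) ∆ prefs (List.ofFn h)).card) := by
        intro g h
        by_cases hgh : g = h
        · subst hgh
          rw [if_pos rfl]
          exact S.int_cond_nspin_sq (List.ofFn g)
        · rw [if_neg hgh]
          exact S.int_cond_nspin_mul hη hδ (fun hc => hgh (List.ofFn_injective hc))
      have hrw : (∑ g : Fin k → Fin d, ∑ h : Fin k → Fin d,
            ∫ ω, nspin σρ ε ζ (List.ofFn g) ω * nspin σρ ε ζ (List.ofFn h) ω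
              ∂(μ[|{ω | σρ ω = 1}]))
          = ∑ g : Fin k → Fin d, ∑ h : Fin k → Fin d, (if g = h then (1:ℝ)
            else (1-2*δ)^2 * (1-2*η)^((prefs (List.ofFn g) ∆ prefs (List.ofFn h)).card)) :=
        Finset.sum_congr rfl fun g _ => Finset.sum_congr rfl fun h _ => hterm g h
      have hdiag : ∀ g : Fin k → Fin d,
          (1-2*η)^((prefs (List.ofFn g) ∆ prefs (List.ofFn g)).card) = 1 := by
        intro g
        rw [symmDiff_self]
        simp
      rw [hrw, diag_sum k ((1-2*δ)^2)
        (fun g h => (1-2*η)^((prefs (List.ofFn g) ∆ prefs (List.ofFn h)).card)) hdiag, TT]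
    rw [variance_eq_sub hmemT]
    have hμX2 : (μ[|{ω | σρ ω = 1}])[(levelSum (nspin σρ ε ζ) k)^2]
        = ∫ ω, (levelSum (nspin σρ ε ζ) k ω)^2 ∂(μ[|{ω | σρ ω = 1}]) := by
      congr 1
    rw [hμX2, m2t, m1t, TT_closed η hx k]
    ring


end BlockModelStmt5
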